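/- arXiv:1504.07814 — 5 statements merged into one kernel-verified Lean document; each statement's English description precedes it below -/
import Mathlib

section
/- Let V and W be finite-dimensional representations of SU(2) on which the center acts by the same scalar. Then the inequality dim(V⊗V)[0] + dim(W⊗W)[0] ≥ 2·dim(V⊗W)[0] is an equality if and only if V ≅ W, i.e., if and only if the two multiplicity functions (equivalently, the two weight multiplicity functions) coincide. -/
/-- `wtDim ℓ k` is the dimension of the `k`-weight space (for the standard maximal torus
`S¹ ⊂ SU(2)`, acting by `z ↦ z^k`) of the representation `⊕ᵢ ℓ i · Sym^i(ℂ²)` of `SU(2)`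
encoded by its multiplicity function `ℓ : ℕ → ℕ`:
`dim E[k] = Σ_{i ≥ |k|, i ≡ k (mod 2)} ℓ i`. -/
noncomputable def wtDim (ℓ : ℕ → ℕ) (k : ℤ) : ℕ :=
  ∑ᶠ i : ℕ, if k.natAbs ≤ i ∧ k % 2 = (i : ℤ) % 2 then ℓ i else 0

/-- `tensorWtDim ℓ₁ ℓ₂ k` is the dimension of the `k`-weight space of the tensor product
of the `SU(2)`-representations encoded by `ℓ₁` and `ℓ₂`:
`dim (E⊗F)[k] = Σ_{j ∈ ℤ} dim E[j] · dim F[k-j]`. -/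
noncomputable def tensorWtDim (ℓ₁ ℓ₂ : ℕ → ℕ) (k : ℤ) : ℕ :=
  ∑ᶠ j : ℤ, wtDim ℓ₁ j * wtDim ℓ₂ (k - j)

lemma wtDim_neg (ℓ : ℕ → ℕ) (k : ℤ) : wtDim ℓ (-k) = wtDim ℓ k := by
  unfold wtDim
  apply finsum_congr
  intro i
  have h : ((-k).natAbs ≤ i ∧ (-k) % 2 = (i : ℤ) % 2) ↔ (k.natAbs ≤ i ∧ k % 2 = (i : ℤ) % 2) := by
    omega
  simp only [h]

lemma wtDim_vanish (ℓ : ℕ → ℕ) (N : ℕ) (h : ∀ i, N < i → ℓ i = 0) (k : ℤ)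
    (hk : N < k.natAbs) : wtDim ℓ k = 0 := by
  unfold wtDim
  apply finsum_eq_zero_of_forall_eq_zero
  intro i
  split
  · next hc => exact h i (by omega)
  · rfl

lemma wtDim_rec (ℓ : ℕ → ℕ) (hfin : (Function.support ℓ).Finite) (i : ℕ) :
    wtDim ℓ (i : ℤ) = ℓ i + wtDim ℓ ((i : ℤ) + 2) := by
  unfold wtDim
  have key : ∀ j : ℕ, (if (i : ℤ).natAbs ≤ j ∧ (i : ℤ) % 2 = (j : ℤ) % 2 then ℓ j else 0)
      = (if j = i then ℓ i else 0)
        + (if ((i : ℤ) + 2).natAbs ≤ j ∧ ((i : ℤ) + 2) % 2 = (j : ℤ) % 2 then ℓ j else 0) := by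
    intro j
    rcases eq_or_ne j i with rfl | hne
    · rw [if_pos (by omega : (j : ℤ).natAbs ≤ j ∧ (j : ℤ) % 2 = (j : ℤ) % 2),
        if_pos rfl, if_neg (by omega)]
      omega
    · rw [if_neg hne, zero_add]
      have h : ((i : ℤ).natAbs ≤ j ∧ (i : ℤ) % 2 = (j : ℤ) % 2)
          ↔ (((i : ℤ) + 2).natAbs ≤ j ∧ ((i : ℤ) + 2) % 2 = (j : ℤ) % 2) := by
        omega
      simp only [h]
  rw [finsum_congr key, finsum_add_distrib]
  · congr 1
    rw [finsum_eq_single _ i (fun x hx => if_neg hx), if_pos rfl]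
  · apply (Set.finite_singleton i).subset
    intro x hx
    simp only [Function.mem_support] at hx
    by_contra h
    simp only [Set.mem_singleton_iff] at h
    exact hx (if_neg h)
  · apply hfin.subset
    intro x hx
    simp only [Function.mem_support] at hx ⊢
    intro h0
    apply hx
    split <;> simp [h0]

/-- For representations `V`, `W` of SU(2) on which the center acts by the same scalar,
the inequality `dim(V⊗V)[0] + dim(W⊗W)[0] ≥ 2·dim(V⊗W)[0]` is an equality
if and only if `V ≅ W`, i.e. iff the multiplicity functions coincide,
equivalently iff the weight multiplicity functions coincide. -/
theorem cauchy_schwarz_same_central_character_equality_iff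
    (ℓV ℓW : ℕ → ℕ)
    (hVfin : (Function.support ℓV).Finite) (hWfin : (Function.support ℓW).Finite)
    (hpar : ∃ p : ℕ, ∀ i : ℕ, (ℓV i ≠ 0 ∨ ℓW i ≠ 0) → i % 2 = p) :
    (tensorWtDim ℓV ℓV 0 + tensorWtDim ℓW ℓW 0 = 2 * tensorWtDim ℓV ℓW 0 ↔ ℓV = ℓW) ∧
    (ℓV = ℓW ↔ ∀ k : ℤ, wtDim ℓV k = wtDim ℓW k) := by
  -- bound N for supports
  obtain ⟨N, hN⟩ : ∃ N : ℕ, ∀ i, N < i → ℓV i = 0 ∧ ℓW i = 0 := by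
    refine ⟨(hVfin.toFinset ∪ hWfin.toFinset).sup id, fun i hi => ?_⟩
    constructor
    · by_contra h
      have hm : i ∈ hVfin.toFinset ∪ hWfin.toFinset :=
        Finset.mem_union_left _ (hVfin.mem_toFinset.2 h)
      have := Finset.le_sup (f := id) hm
      simp only [id] at this
      omega
    · by_contra h
      have hm : i ∈ hVfin.toFinset ∪ hWfin.toFinset :=
        Finset.mem_union_right _ (hWfin.mem_toFinset.2 h)
      have := Finset.le_sup (f := id) hm
      simp only [id] at this
      omega
  have hVz : ∀ k : ℤ, N < k.natAbs → wtDim ℓV k = 0 :=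
    fun k hk => wtDim_vanish ℓV N (fun i hi => (hN i hi).1) k hk
  have hWz : ∀ k : ℤ, N < k.natAbs → wtDim ℓW k = 0 :=
    fun k hk => wtDim_vanish ℓW N (fun i hi => (hN i hi).2) k hk
  set T : Finset ℤ := Finset.Icc (-(N : ℤ)) (N : ℤ) with hT
  have htens : ∀ ℓ₁ ℓ₂ : ℕ → ℕ, (∀ k : ℤ, N < k.natAbs → wtDim ℓ₁ k = 0) →
      tensorWtDim ℓ₁ ℓ₂ 0 = ∑ j ∈ T, wtDim ℓ₁ j * wtDim ℓ₂ j := by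
    intro ℓ₁ ℓ₂ h1
    unfold tensorWtDim
    rw [finsum_eq_finset_sum_of_support_subset]
    · apply Finset.sum_congr rfl
      intro j _
      rw [zero_sub, wtDim_neg]
    · intro j hj
      simp only [Function.mem_support] at hj
      simp only [Finset.coe_Icc, Set.mem_Icc, hT]
      by_contra h
      push_neg at h
      have : N < j.natAbs := by omega
      rw [h1 j this, zero_mul] at hj
      exact hj rfl
  have h2 : (∀ k : ℤ, wtDim ℓV k = wtDim ℓW k) ↔ ℓV = ℓW := by
    constructor
    · intro h
      funext i
      have h1 := wtDim_rec ℓV hVfin i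
      have h2 := wtDim_rec ℓW hWfin i
      have := h (i : ℤ)
      have := h ((i : ℤ) + 2)
      omega
    · rintro rfl k; rfl
  constructor
  · rw [htens ℓV ℓV hVz, htens ℓW ℓW hWz, htens ℓV ℓW hVz, Finset.mul_sum,
      ← Finset.sum_add_distrib]
    have hle : ∀ j ∈ T, 2 * (wtDim ℓV j * wtDim ℓW j)
        ≤ wtDim ℓV j * wtDim ℓV j + wtDim ℓW j * wtDim ℓW j := by
      intro j _; nlinarith [sq_nonneg ((wtDim ℓV j : ℤ) - wtDim ℓW j)]
    rw [eq_comm, Finset.sum_eq_sum_iff_of_le hle]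
    constructor
    · intro h
      rw [← h2]
      intro k
      by_cases hk : N < k.natAbs
      · rw [hVz k hk, hWz k hk]
      · have hkT : k ∈ T := by simp [hT]; omega
        have := h k hkT
        nlinarith [this]
    · rintro rfl
      intro j _
      ring
  · exact h2.symm
end

section
/- Let V = Σ_{i≥0} n_i·Sym^{2i}(ℂ²) and W = Σ_{i≥1} m_i·Sym^{2i−1}(ℂ²) be finite-dimensional representations of SU(2) with opposite central characters, not both zero. Then the inequality is strict: dim(V⊗V)[0] + dim(W⊗W)[0] > 2·dim(V⊗W)[1]. -/
/-- Multiplicity function of `V = Σ_{i=0}^{d} n_i · Sym^{2i}(ℂ²)`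
(trivial central character). -/
def evenRep (d : ℕ) (n : ℕ → ℕ) : ℕ → ℕ :=
  fun j => if j % 2 = 0 ∧ j / 2 ≤ d then n (j / 2) else 0

/-- Multiplicity function of `W = Σ_{i=1}^{d} m_i · Sym^{2i-1}(ℂ²)`
(non-trivial central character). -/
def oddRep (d : ℕ) (m : ℕ → ℕ) : ℕ → ℕ :=
  fun j => if j % 2 = 1 ∧ (j + 1) / 2 ≤ d then m ((j + 1) / 2) else 0

/-- `wtDim` as a finite sum, for a multiplicity function supported below `N`. -/
lemma wtDim_eq_sum (ℓ : ℕ → ℕ) (N : ℕ) (hN : ∀ i, N ≤ i → ℓ i = 0) (k : ℤ) :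
    wtDim ℓ k = ∑ i ∈ Finset.range N,
      if k.natAbs ≤ i ∧ k % 2 = (i : ℤ) % 2 then ℓ i else 0 := by
  rw [wtDim]
  apply finsum_eq_finset_sum_of_support_subset
  intro i hi
  simp only [Function.mem_support] at hi
  simp only [Finset.coe_range, Set.mem_Iio]
  by_contra h
  push_neg at h
  apply hi
  rw [hN i h]
  simp

lemma wtDim_evenRep_eq_zero (d : ℕ) (n : ℕ → ℕ) (k : ℤ) (h : 2 * d < k.natAbs) :
    wtDim (evenRep d n) k = 0 := by
  rw [wtDim]
  apply finsum_eq_zero_of_forall_eq_zero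
  intro i
  split_ifs with hi
  · rw [evenRep]
    split_ifs with hi2
    · omega
    · rfl
  · rfl

lemma wtDim_oddRep_eq_zero (d : ℕ) (m : ℕ → ℕ) (k : ℤ) (h : 2 * d ≤ k.natAbs) :
    wtDim (oddRep d m) k = 0 := by
  rw [wtDim]
  apply finsum_eq_zero_of_forall_eq_zero
  intro i
  split_ifs with hi
  · rw [oddRep]
    split_ifs with hi2
    · omega
    · rfl
  · rfl

lemma evenRep_supp (d : ℕ) (n : ℕ → ℕ) : ∀ i, 2 * d + 1 ≤ i → evenRep d n i = 0 := by
  intro i hi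
  rw [evenRep]
  split_ifs with h
  · omega
  · rfl

lemma oddRep_supp (d : ℕ) (m : ℕ → ℕ) : ∀ i, 2 * d + 1 ≤ i → oddRep d m i = 0 := by
  intro i hi
  rw [oddRep]
  split_ifs with h
  · omega
  · rfl

lemma wtDim_evenRep_zero_ne (d : ℕ) (n : ℕ → ℕ) (i : ℕ) (hid : i ≤ d) (hni : n i ≠ 0) :
    wtDim (evenRep d n) 0 ≠ 0 := by
  rw [wtDim_eq_sum _ (2 * d + 1) (evenRep_supp d n)]
  intro h
  rw [Finset.sum_eq_zero_iff] at h
  have hmem : 2 * i ∈ Finset.range (2 * d + 1) := by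
    simp only [Finset.mem_range]; omega
  have := h (2 * i) hmem
  rw [if_pos] at this
  · rw [evenRep] at this
    rw [if_pos] at this
    · apply hni
      have : n (2 * i / 2) = 0 := this
      rwa [Nat.mul_div_cancel_left i (by norm_num)] at this
    · constructor
      · omega
      · omega
  · constructor
    · simp
    · have : ((2 * i : ℕ) : ℤ) % 2 = 0 := by push_cast; omega
      simp [this]

lemma wtDim_oddRep_one_ne (d : ℕ) (m : ℕ → ℕ) (i : ℕ) (h1 : 1 ≤ i) (hid : i ≤ d)
    (hmi : m i ≠ 0) : wtDim (oddRep d m) 1 ≠ 0 := by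
  rw [wtDim_eq_sum _ (2 * d + 1) (oddRep_supp d m)]
  intro h
  rw [Finset.sum_eq_zero_iff] at h
  have hmem : 2 * i - 1 ∈ Finset.range (2 * d + 1) := by
    simp only [Finset.mem_range]; omega
  have := h (2 * i - 1) hmem
  rw [if_pos] at this
  · rw [oddRep] at this
    rw [if_pos] at this
    · apply hmi
      have heq : (2 * i - 1 + 1) / 2 = i := by omega
      rwa [heq] at this
    · constructor
      · omega
      · omega
  · constructor
    · omega
    · have : ((2 * i - 1 : ℕ) : ℤ) % 2 = 1 := by omega
      simp [this]

lemma nat_amgm (a b : ℕ) : 2 * (a * b) ≤ a * a + b * b := by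
  zify
  nlinarith [sq_nonneg ((a : ℤ) - b)]

lemma nat_amgm_strict (a b : ℕ) (h : a ≠ b) : 2 * (a * b) < a * a + b * b := by
  rcases Nat.lt_or_ge a b with h' | h'
  · nlinarith
  · have h'' : b < a := by omega
    nlinarith

/-- For `V = Σ_{i=0}^{d} n_i·Sym^{2i}(ℂ²)` and `W = Σ_{i=1}^{d} m_i·Sym^{2i-1}(ℂ²)`
not both zero, the Cauchy–Schwarz inequality for opposite central characters is strict:
`dim(V⊗V)[0] + dim(W⊗W)[0] > 2·dim(V⊗W)[1]`. -/
theorem cauchy_schwarz_opposite_central_characters_strict (d : ℕ) (n m : ℕ → ℕ)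
    (hne : (∃ i, i ≤ d ∧ n i ≠ 0) ∨ (∃ i, 1 ≤ i ∧ i ≤ d ∧ m i ≠ 0)) :
    2 * tensorWtDim (evenRep d n) (oddRep d m) 1 <
      tensorWtDim (evenRep d n) (evenRep d n) 0 +
        tensorWtDim (oddRep d m) (oddRep d m) 0 := by
  set A : ℤ → ℕ := wtDim (evenRep d n) with hA
  set B : ℤ → ℕ := wtDim (oddRep d m) with hB
  have hA0 : ∀ j : ℤ, 2 * d < j.natAbs → A j = 0 := fun j h => wtDim_evenRep_eq_zero d n j h
  have hB0 : ∀ j : ℤ, 2 * d ≤ j.natAbs → B j = 0 := fun j h => wtDim_oddRep_eq_zero d m j h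
  have hAsym : ∀ j : ℤ, A (-j) = A j := fun j => wtDim_neg _ j
  have hBsym : ∀ j : ℤ, B (-j) = B j := fun j => wtDim_neg _ j
  set S : Finset ℤ := Finset.Icc (-(2 * (d : ℤ) + 2)) (2 * (d : ℤ) + 2) with hS
  have hmemS : ∀ j : ℤ, j ∈ S ↔ -(2 * (d : ℤ) + 2) ≤ j ∧ j ≤ 2 * (d : ℤ) + 2 := by
    intro j; rw [hS, Finset.mem_Icc]
  -- the three tensor weight dimensions as sums over S
  have hT : tensorWtDim (evenRep d n) (oddRep d m) 1 = ∑ j ∈ S, A j * B (1 - j) := by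
    rw [tensorWtDim]
    apply finsum_eq_finset_sum_of_support_subset
    intro j hj
    simp only [Function.mem_support] at hj
    rw [Finset.coe_Icc, Set.mem_Icc]
    by_contra h
    push_neg at h
    apply hj
    have : A j = 0 := hA0 j (by omega)
    exact mul_eq_zero_of_left this _
  have hVV : tensorWtDim (evenRep d n) (evenRep d n) 0 = ∑ j ∈ S, A j * A (0 - j) := by
    rw [tensorWtDim]
    apply finsum_eq_finset_sum_of_support_subset
    intro j hj
    simp only [Function.mem_support] at hj
    rw [Finset.coe_Icc, Set.mem_Icc]
    by_contra h
    push_neg at h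
    apply hj
    have : A j = 0 := hA0 j (by omega)
    exact mul_eq_zero_of_left this _
  have hWW : tensorWtDim (oddRep d m) (oddRep d m) 0 = ∑ j ∈ S, B j * B (0 - j) := by
    rw [tensorWtDim]
    apply finsum_eq_finset_sum_of_support_subset
    intro j hj
    simp only [Function.mem_support] at hj
    rw [Finset.coe_Icc, Set.mem_Icc]
    by_contra h
    push_neg at h
    apply hj
    have : B j = 0 := hB0 j (by omega)
    exact mul_eq_zero_of_left this _
  have hVV' : tensorWtDim (evenRep d n) (evenRep d n) 0 = ∑ j ∈ S, A j * A j := by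
    rw [hVV]
    apply Finset.sum_congr rfl
    intro j _
    rw [zero_sub, hAsym]
  -- rewrite the WW sum as a sum of B(1-j)^2 via the finsum reindexing
  have hWW' : tensorWtDim (oddRep d m) (oddRep d m) 0 = ∑ j ∈ S, B (1 - j) * B (1 - j) := by
    have e1 : ∑ j ∈ S, B j * B (0 - j) = ∑ j ∈ S, B j * B j := by
      apply Finset.sum_congr rfl
      intro j _
      rw [zero_sub, hBsym]
    have e2 : ∑ j ∈ S, B j * B j = ∑ᶠ j : ℤ, B j * B j := by
      symm
      apply finsum_eq_finset_sum_of_support_subset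
      intro j hj
      simp only [Function.mem_support] at hj
      rw [Finset.coe_Icc, Set.mem_Icc]
      by_contra h
      push_neg at h
      apply hj
      have : B j = 0 := hB0 j (by omega)
      exact mul_eq_zero_of_left this _
    have e3 : ∑ᶠ j : ℤ, B j * B j = ∑ᶠ j : ℤ, B (1 - j) * B (1 - j) := by
      exact (finsum_comp_equiv (Equiv.subLeft (1 : ℤ)) (f := fun j => B j * B j)).symm ▸ rfl
    have e4 : ∑ᶠ j : ℤ, B (1 - j) * B (1 - j) = ∑ j ∈ S, B (1 - j) * B (1 - j) := by
      apply finsum_eq_finset_sum_of_support_subset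
      intro j hj
      simp only [Function.mem_support] at hj
      rw [Finset.coe_Icc, Set.mem_Icc]
      by_contra h
      push_neg at h
      apply hj
      have : B (1 - j) = 0 := hB0 (1 - j) (by omega)
      exact mul_eq_zero_of_left this _
    rw [hWW, e1, e2, e3, e4]
  -- find a witness where strict inequality holds
  have hwit : ∃ j ∈ S, A j ≠ B (1 - j) := by
    by_contra hc
    push_neg at hc
    -- A j = B (1 - j) for all j ∈ S
    have key : ∀ j : ℤ, -(2 * (d : ℤ) + 2) ≤ j → j ≤ 2 * (d : ℤ) + 2 →
        B (j - 1) = B (j + 1) := by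
      intro j hj1 hj2
      have h1 : A j = B (1 - j) := hc j ((hmemS j).mpr ⟨hj1, hj2⟩)
      have h2 : A (-j) = B (1 + j) := by
        have := hc (-j) ((hmemS (-j)).mpr ⟨by omega, by omega⟩)
        rwa [show (1 : ℤ) - -j = 1 + j by ring] at this
      have h3 : B (j - 1) = B (1 - j) := by
        rw [show (1 : ℤ) - j = -(j - 1) by ring, hBsym]
      have h4 : (1 : ℤ) + j = j + 1 := by ring
      rw [h3, ← h1, ← hAsym j, h2, h4]
    have chain : ∀ t : ℕ, t ≤ d + 1 → B 1 = B (2 * (t : ℤ) + 1) := by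
      intro t
      induction t with
      | zero => intro _; norm_num
      | succ s ih =>
        intro hs
        have hs' : s ≤ d + 1 := by omega
        have := key (2 * (s : ℤ) + 2) (by omega) (by omega)
        rw [ih hs']
        rw [show (2 : ℤ) * (s : ℤ) + 2 - 1 = 2 * (s : ℤ) + 1 by ring,
          show (2 : ℤ) * (s : ℤ) + 2 + 1 = 2 * ((s : ℤ) + 1) + 1 by ring] at this
        rw [this]
        push_cast
        ring_nf
    have hB1 : B 1 ≠ 0 := by
      rcases hne with ⟨i, hid, hni⟩ | ⟨i, h1, hid, hmi⟩
      · have hA0ne : A 0 ≠ 0 := wtDim_evenRep_zero_ne d n i hid hni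
        have := hc 0 ((hmemS 0).mpr ⟨by omega, by omega⟩)
        rw [show (1 : ℤ) - 0 = 1 by ring] at this
        rw [← this]
        exact hA0ne
      · exact wtDim_oddRep_one_ne d m i h1 hid hmi
    have hBend : B (2 * ((d : ℤ) + 1) + 1) = 0 := hB0 _ (by omega)
    have := chain (d + 1) le_rfl
    rw [show (2 : ℤ) * ((d + 1 : ℕ) : ℤ) + 1 = 2 * ((d : ℤ) + 1) + 1 by push_cast; ring] at this
    rw [hBend] at this
    exact hB1 this
  obtain ⟨j₀, hj₀S, hj₀⟩ := hwit
  rw [hT, hVV', hWW', Finset.mul_sum, ← Finset.sum_add_distrib]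
  apply Finset.sum_lt_sum
  · intro j _
    exact nat_amgm (A j) (B (1 - j))
  · exact ⟨j₀, hj₀S, nat_amgm_strict (A j₀) (B (1 - j₀)) hj₀⟩
end

section
/- Let V = Σ_{i=0}^{d} n_i·Sym^{2i}(ℂ²) and W = Σ_{i=1}^{d} m_i·Sym^{2i−1}(ℂ²) be two finite-dimensional representations of SU(2). Then 2·dim(V⊗W)[1] − dim(V⊗V)[2] − dim(W⊗W)[2] ≤ Σ_{i=0}^{d} n_i² + Σ_{i=1}^{d} m_i². -/
namespace TwoWtAux

lemma sum_ite_range (d c : ℕ) (n : ℕ → ℕ) :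
    ∑ a ∈ Finset.range (d+1), (if c ≤ a then n a else 0) = ∑ i ∈ Finset.Icc c d, n i := by
  rw [← Finset.sum_filter]
  congr 1
  ext a
  simp only [Finset.mem_filter, Finset.mem_range, Finset.mem_Icc]
  omega

lemma sum_ite_Icc (d c : ℕ) (hc : 1 ≤ c) (m : ℕ → ℕ) :
    ∑ a ∈ Finset.Icc 1 d, (if c ≤ a then m a else 0) = ∑ i ∈ Finset.Icc c d, m i := by
  rw [← Finset.sum_filter]
  congr 1
  ext a
  simp only [Finset.mem_filter, Finset.mem_Icc]
  omega

lemma wt_even (d : ℕ) (n : ℕ → ℕ) (k : ℤ) :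
    wtDim (evenRep d n) k =
      if k % 2 = 0 then ∑ i ∈ Finset.Icc ((k.natAbs + 1) / 2) d, n i else 0 := by
  simp only [wtDim]
  by_cases hk : k % 2 = 0
  · rw [if_pos hk]
    have hsupp : (Function.support fun i : ℕ =>
        if k.natAbs ≤ i ∧ k % 2 = (i : ℤ) % 2 then evenRep d n i else 0) ⊆
        ((Finset.range (d+1)).image (fun a => 2 * a) : Finset ℕ) := by
      intro i hi
      simp only [Function.mem_support] at hi
      by_cases hcond : k.natAbs ≤ i ∧ k % 2 = (i : ℤ) % 2
      · rw [if_pos hcond] at hi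
        have h2 : i % 2 = 0 ∧ i / 2 ≤ d := by
          by_contra h
          exact hi (by simp only [evenRep]; exact if_neg h)
        simp only [Finset.coe_image, Set.mem_image, Finset.mem_coe, Finset.mem_range]
        exact ⟨i / 2, by omega, by omega⟩
      · rw [if_neg hcond] at hi; exact absurd rfl hi
    rw [finsum_eq_finset_sum_of_support_subset _ hsupp,
      Finset.sum_image (by intro x _ y _ h; simp only at h; omega)]
    rw [← sum_ite_range d ((k.natAbs + 1) / 2) n]
    refine Finset.sum_congr rfl fun a ha => ?_
    simp only [Finset.mem_range] at ha
    have hrep : evenRep d n (2 * a) = n a := by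
      simp only [evenRep]
      rw [if_pos ⟨by omega, by omega⟩, show 2*a/2 = a by omega]
    by_cases hca : (k.natAbs + 1)/2 ≤ a
    · rw [if_pos ⟨by omega, by push_cast; omega⟩, if_pos hca, hrep]
    · rw [if_neg (by rintro ⟨h1, -⟩; omega), if_neg hca]
  · rw [if_neg hk]
    refine finsum_eq_zero_of_forall_eq_zero fun i => ?_
    by_cases hcond : k.natAbs ≤ i ∧ k % 2 = (i : ℤ) % 2
    · rw [if_pos hcond]
      simp only [evenRep]
      rw [if_neg]
      rintro ⟨h1, -⟩
      have := hcond.2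
      omega
    · rw [if_neg hcond]

lemma wt_odd (d : ℕ) (m : ℕ → ℕ) (k : ℤ) :
    wtDim (oddRep d m) k =
      if k % 2 = 0 then 0 else ∑ i ∈ Finset.Icc ((k.natAbs + 1) / 2) d, m i := by
  simp only [wtDim]
  by_cases hk : k % 2 = 0
  · rw [if_pos hk]
    refine finsum_eq_zero_of_forall_eq_zero fun i => ?_
    by_cases hcond : k.natAbs ≤ i ∧ k % 2 = (i : ℤ) % 2
    · rw [if_pos hcond]
      simp only [oddRep]
      rw [if_neg]
      rintro ⟨h1, -⟩
      have := hcond.2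
      omega
    · rw [if_neg hcond]
  · rw [if_neg hk]
    have hk1 : k % 2 = 1 := by omega
    have hsupp : (Function.support fun i : ℕ =>
        if k.natAbs ≤ i ∧ k % 2 = (i : ℤ) % 2 then oddRep d m i else 0) ⊆
        ((Finset.Icc 1 d).image (fun a => 2 * a - 1) : Finset ℕ) := by
      intro i hi
      simp only [Function.mem_support] at hi
      by_cases hcond : k.natAbs ≤ i ∧ k % 2 = (i : ℤ) % 2
      · rw [if_pos hcond] at hi
        have h2 : i % 2 = 1 ∧ (i + 1) / 2 ≤ d := by
          by_contra h
          exact hi (by simp only [oddRep]; exact if_neg h)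
        simp only [Finset.coe_image, Set.mem_image, Finset.mem_coe, Finset.mem_Icc]
        exact ⟨(i + 1) / 2, by omega, by omega⟩
      · rw [if_neg hcond] at hi; exact absurd rfl hi
    rw [finsum_eq_finset_sum_of_support_subset _ hsupp,
      Finset.sum_image (by intro x hx y hy h; simp only [Finset.mem_coe, Finset.mem_Icc] at hx hy h; omega)]
    rw [← sum_ite_Icc d ((k.natAbs + 1) / 2) (by omega) m]
    refine Finset.sum_congr rfl fun a ha => ?_
    simp only [Finset.mem_Icc] at ha
    have hrep : oddRep d m (2 * a - 1) = m a := by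
      simp only [oddRep]
      rw [if_pos ⟨by omega, by omega⟩, show (2*a-1+1)/2 = a by omega]
    by_cases hca : (k.natAbs + 1)/2 ≤ a
    · rw [if_pos ⟨by omega, by omega⟩, if_pos hca, hrep]
    · rw [if_neg (by rintro ⟨h1, -⟩; omega), if_neg hca]

lemma wt_even_ne (d : ℕ) (n : ℕ → ℕ) {j : ℤ} (h : wtDim (evenRep d n) j ≠ 0) :
    j % 2 = 0 ∧ (j.natAbs + 1) / 2 ≤ d := by
  rw [wt_even] at h
  by_cases h2 : j % 2 = 0
  · refine ⟨h2, ?_⟩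
    by_contra hc
    rw [if_pos h2, Finset.Icc_eq_empty (by omega), Finset.sum_empty] at h
    exact h rfl
  · rw [if_neg h2] at h; exact absurd rfl h

lemma wt_odd_ne (d : ℕ) (m : ℕ → ℕ) {j : ℤ} (h : wtDim (oddRep d m) j ≠ 0) :
    j % 2 = 1 ∧ (j.natAbs + 1) / 2 ≤ d := by
  rw [wt_odd] at h
  by_cases h2 : j % 2 = 0
  · rw [if_pos h2] at h; exact absurd rfl h
  · refine ⟨by omega, ?_⟩
    by_contra hc
    rw [if_neg h2, Finset.Icc_eq_empty (by omega), Finset.sum_empty] at h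
    exact h rfl

lemma tensor_vw (d : ℕ) (n m : ℕ → ℕ) :
    tensorWtDim (evenRep d n) (oddRep d m) 1 =
      ∑ a ∈ Finset.range d, (∑ i ∈ Finset.Icc (a+1) d, n i) * (∑ i ∈ Finset.Icc (a+2) d, m i)
      + ∑ a ∈ Finset.range (d+1),
          (∑ i ∈ Finset.Icc a d, n i) * (∑ i ∈ Finset.Icc (max a 1) d, m i) := by
  simp only [tensorWtDim]
  have hsupp : (Function.support fun j : ℤ =>
      wtDim (evenRep d n) j * wtDim (oddRep d m) (1 - j)) ⊆
      ((Finset.range (2*d+1)).image (fun a : ℕ => 2*(a:ℤ) - 2*d) : Finset ℤ) := by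
    intro j hj
    simp only [Function.mem_support] at hj
    have h1 : wtDim (evenRep d n) j ≠ 0 := fun h => hj (by rw [h, Nat.zero_mul])
    obtain ⟨he, hle⟩ := wt_even_ne d n h1
    simp only [Finset.coe_image, Set.mem_image, Finset.mem_coe, Finset.mem_range]
    exact ⟨((j + 2*d)/2).toNat, by omega, by omega⟩
  rw [finsum_eq_finset_sum_of_support_subset _ hsupp,
    Finset.sum_image (by intro x _ y _ h; simp only at h; omega)]
  rw [show 2*d+1 = d + (d+1) by omega, Finset.sum_range_add]
  congr 1
  · rw [← Finset.sum_range_reflect]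
    refine Finset.sum_congr rfl fun a ha => ?_
    simp only [Finset.mem_range] at ha
    rw [wt_even, wt_odd, if_pos (by omega), if_neg (by omega)]
    have e1 : ((2*((d-1-a : ℕ):ℤ) - 2*d).natAbs + 1)/2 = a + 1 := by omega
    have e2 : ((1 - (2*((d-1-a : ℕ):ℤ) - 2*d)).natAbs + 1)/2 = a + 2 := by omega
    rw [e1, e2]
  · refine Finset.sum_congr rfl fun a ha => ?_
    simp only [Finset.mem_range] at ha
    rw [wt_even, wt_odd, if_pos (by omega), if_neg (by omega)]
    have e1 : ((2*((d+a:ℕ):ℤ) - 2*d).natAbs + 1)/2 = a := by omega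
    have e2 : ((1 - (2*((d+a:ℕ):ℤ) - 2*d)).natAbs + 1)/2 = max a 1 := by
      rcases a with _ | b
      · norm_num
      · rw [show max (b+1) 1 = b + 1 by omega]
        omega
    rw [e1, e2]

lemma tensor_vv (d : ℕ) (n : ℕ → ℕ) :
    tensorWtDim (evenRep d n) (evenRep d n) 2 =
      ∑ a ∈ Finset.range d, (∑ i ∈ Finset.Icc (a+1) d, n i) * (∑ i ∈ Finset.Icc (a+2) d, n i)
      + ∑ a ∈ Finset.range (d+1),
          (∑ i ∈ Finset.Icc a d, n i) * (∑ i ∈ Finset.Icc (if a = 0 then 1 else a-1) d, n i) := by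
  simp only [tensorWtDim]
  have hsupp : (Function.support fun j : ℤ =>
      wtDim (evenRep d n) j * wtDim (evenRep d n) (2 - j)) ⊆
      ((Finset.range (2*d+1)).image (fun a : ℕ => 2*(a:ℤ) - 2*d) : Finset ℤ) := by
    intro j hj
    simp only [Function.mem_support] at hj
    have h1 : wtDim (evenRep d n) j ≠ 0 := fun h => hj (by rw [h, Nat.zero_mul])
    obtain ⟨he, hle⟩ := wt_even_ne d n h1
    simp only [Finset.coe_image, Set.mem_image, Finset.mem_coe, Finset.mem_range]
    exact ⟨((j + 2*d)/2).toNat, by omega, by omega⟩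
  rw [finsum_eq_finset_sum_of_support_subset _ hsupp,
    Finset.sum_image (by intro x _ y _ h; simp only at h; omega)]
  rw [show 2*d+1 = d + (d+1) by omega, Finset.sum_range_add]
  congr 1
  · rw [← Finset.sum_range_reflect]
    refine Finset.sum_congr rfl fun a ha => ?_
    simp only [Finset.mem_range] at ha
    rw [wt_even, wt_even, if_pos (by omega), if_pos (by omega)]
    have e1 : ((2*((d-1-a : ℕ):ℤ) - 2*d).natAbs + 1)/2 = a + 1 := by omega
    have e2 : ((2 - (2*((d-1-a : ℕ):ℤ) - 2*d)).natAbs + 1)/2 = a + 2 := by omega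
    rw [e1, e2]
  · refine Finset.sum_congr rfl fun a ha => ?_
    simp only [Finset.mem_range] at ha
    rw [wt_even, wt_even, if_pos (by omega), if_pos (by omega)]
    have e1 : ((2*((d+a:ℕ):ℤ) - 2*d).natAbs + 1)/2 = a := by omega
    have e2 : ((2 - (2*((d+a:ℕ):ℤ) - 2*d)).natAbs + 1)/2 = if a = 0 then 1 else a-1 := by
      rcases a with _ | b
      · norm_num
      · rw [if_neg (Nat.succ_ne_zero b)]
        omega
    rw [e1, e2]

lemma tensor_ww (d : ℕ) (m : ℕ → ℕ) :
    tensorWtDim (oddRep d m) (oddRep d m) 2 =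
      ∑ a ∈ Finset.range (d+1), (∑ i ∈ Finset.Icc (a+1) d, m i) * (∑ i ∈ Finset.Icc (a+2) d, m i)
      + ∑ a ∈ Finset.range (d+1),
          (∑ i ∈ Finset.Icc (a+1) d, m i) * (∑ i ∈ Finset.Icc (max a 1) d, m i) := by
  simp only [tensorWtDim]
  have hsupp : (Function.support fun j : ℤ =>
      wtDim (oddRep d m) j * wtDim (oddRep d m) (2 - j)) ⊆
      ((Finset.range (2*d+2)).image (fun a : ℕ => 2*(a:ℤ) - (2*d+1)) : Finset ℤ) := by
    intro j hj
    simp only [Function.mem_support] at hj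
    have h1 : wtDim (oddRep d m) j ≠ 0 := fun h => hj (by rw [h, Nat.zero_mul])
    obtain ⟨he, hle⟩ := wt_odd_ne d m h1
    simp only [Finset.coe_image, Set.mem_image, Finset.mem_coe, Finset.mem_range]
    exact ⟨((j + 2*d+1)/2).toNat, by omega, by omega⟩
  rw [finsum_eq_finset_sum_of_support_subset _ hsupp,
    Finset.sum_image (by intro x _ y _ h; simp only at h; omega)]
  rw [show 2*d+2 = (d+1) + (d+1) by omega, Finset.sum_range_add]
  congr 1
  · rw [← Finset.sum_range_reflect]
    refine Finset.sum_congr rfl fun a ha => ?_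
    simp only [Finset.mem_range] at ha
    rw [wt_odd, wt_odd, if_neg (by omega), if_neg (by omega)]
    have e1 : ((2*((d+1-1-a : ℕ):ℤ) - (2*d+1)).natAbs + 1)/2 = a + 1 := by omega
    have e2 : ((2 - (2*((d+1-1-a : ℕ):ℤ) - (2*d+1))).natAbs + 1)/2 = a + 2 := by omega
    rw [e1, e2]
  · refine Finset.sum_congr rfl fun a ha => ?_
    simp only [Finset.mem_range] at ha
    rw [wt_odd, wt_odd, if_neg (by omega), if_neg (by omega)]
    have e1 : ((2*((d+1+a:ℕ):ℤ) - (2*d+1)).natAbs + 1)/2 = a + 1 := by omega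
    have e2 : ((2 - (2*((d+1+a:ℕ):ℤ) - (2*d+1))).natAbs + 1)/2 = max a 1 := by
      rcases a with _ | b
      · norm_num
        omega
      · rw [show max (b+1) 1 = b + 1 by omega]
        omega
    rw [e1, e2]


lemma key_eq (d : ℕ) (f g : ℕ → ℤ) :
    ∑ a ∈ Finset.range (d+1), (f a - f (a+1))^2 + ∑ a ∈ Finset.Icc 1 d, (g a - g (a+1))^2
    = 2*(∑ a ∈ Finset.range d, f (a+1) * g (a+2)
          + ∑ a ∈ Finset.range (d+1), f a * g (max a 1))
      - (∑ a ∈ Finset.range d, f (a+1) * f (a+2)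
          + ∑ a ∈ Finset.range (d+1), f a * f (if a = 0 then 1 else a-1))
      - (∑ a ∈ Finset.range (d+1), g (a+1) * g (a+2)
          + ∑ a ∈ Finset.range (d+1), g (a+1) * g (max a 1))
      + ((f 0 - g 1)^2 + ∑ a ∈ Finset.Icc 1 d, ((f a - g a)^2 + (f a - g (a+1))^2))
      + (f (d+1)^2 - f d * f (d+1) + g (d+1) * g (d+2)) := by
  induction d with
  | zero =>
    norm_num [Finset.sum_range_succ]
    ring
  | succ d ih =>
    simp only [Finset.sum_range_succ] at ih ⊢
    rw [Finset.sum_Icc_succ_top (by omega : 1 ≤ d + 1),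
      Finset.sum_Icc_succ_top (by omega : 1 ≤ d + 1),
      show max (d+1) 1 = d + 1 by omega,
      show (if d + 1 = 0 then 1 else d + 1 - 1) = d by simp]
    linear_combination ih

end TwoWtAux

/-- For `V = Σ_{i=0}^{d} n_i·Sym^{2i}(ℂ²)` and `W = Σ_{i=1}^{d} m_i·Sym^{2i-1}(ℂ²)`,
`2·dim(V⊗W)[1] − dim(V⊗V)[2] − dim(W⊗W)[2] ≤ Σ_{i=0}^{d} n_i² + Σ_{i=1}^{d} m_i²`. -/
theorem corollary_two_weight_bound (d : ℕ) (n m : ℕ → ℕ) :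
    2 * (tensorWtDim (evenRep d n) (oddRep d m) 1 : ℤ)
        - tensorWtDim (evenRep d n) (evenRep d n) 2
        - tensorWtDim (oddRep d m) (oddRep d m) 2 ≤
      (∑ i ∈ Finset.range (d + 1), (n i : ℤ) ^ 2)
        + ∑ i ∈ Finset.Icc 1 d, (m i : ℤ) ^ 2 := by
  rw [TwoWtAux.tensor_vw d n m, TwoWtAux.tensor_vv d n, TwoWtAux.tensor_ww d m]
  push_cast
  have K := TwoWtAux.key_eq d (fun c => ∑ i ∈ Finset.Icc c d, (n i : ℤ))
      (fun c => ∑ i ∈ Finset.Icc c d, (m i : ℤ))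
  have hf0 : ∑ i ∈ Finset.Icc (d+1) d, (n i : ℤ) = 0 := by
    rw [Finset.Icc_eq_empty (by omega), Finset.sum_empty]
  have hg0 : ∑ i ∈ Finset.Icc (d+1) d, (m i : ℤ) = 0 := by
    rw [Finset.Icc_eq_empty (by omega), Finset.sum_empty]
  have hg1 : ∑ i ∈ Finset.Icc (d+2) d, (m i : ℤ) = 0 := by
    rw [Finset.Icc_eq_empty (by omega), Finset.sum_empty]
  rw [hf0, hg0, hg1] at K
  have hR1 : ∑ i ∈ Finset.range (d+1), (n i : ℤ)^2
      = ∑ a ∈ Finset.range (d+1),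
          ((∑ i ∈ Finset.Icc a d, (n i:ℤ)) - ∑ i ∈ Finset.Icc (a+1) d, (n i:ℤ))^2 := by
    refine Finset.sum_congr rfl fun a ha => ?_
    simp only [Finset.mem_range] at ha
    have hins : Finset.Icc a d = insert a (Finset.Icc (a+1) d) := by
      ext x
      simp only [Finset.mem_insert, Finset.mem_Icc]
      omega
    rw [hins, Finset.sum_insert (by simp only [Finset.mem_Icc]; omega)]
    ring
  have hR2 : ∑ i ∈ Finset.Icc 1 d, (m i : ℤ)^2
      = ∑ a ∈ Finset.Icc 1 d,
          ((∑ i ∈ Finset.Icc a d, (m i:ℤ)) - ∑ i ∈ Finset.Icc (a+1) d, (m i:ℤ))^2 := by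
    refine Finset.sum_congr rfl fun a ha => ?_
    simp only [Finset.mem_Icc] at ha
    have hins : Finset.Icc a d = insert a (Finset.Icc (a+1) d) := by
      ext x
      simp only [Finset.mem_insert, Finset.mem_Icc]
      omega
    rw [hins, Finset.sum_insert (by simp only [Finset.mem_Icc]; omega)]
    ring
  rw [hR1, hR2]
  have hpos : (0:ℤ) ≤ ((∑ i ∈ Finset.Icc 0 d, (n i:ℤ)) - ∑ i ∈ Finset.Icc 1 d, (m i:ℤ))^2
      + ∑ a ∈ Finset.Icc 1 d,
          (((∑ i ∈ Finset.Icc a d, (n i:ℤ)) - ∑ i ∈ Finset.Icc a d, (m i:ℤ))^2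
            + ((∑ i ∈ Finset.Icc a d, (n i:ℤ)) - ∑ i ∈ Finset.Icc (a+1) d, (m i:ℤ))^2) := by
    have h1 : (0:ℤ) ≤ ∑ a ∈ Finset.Icc 1 d,
        (((∑ i ∈ Finset.Icc a d, (n i:ℤ)) - ∑ i ∈ Finset.Icc a d, (m i:ℤ))^2
          + ((∑ i ∈ Finset.Icc a d, (n i:ℤ)) - ∑ i ∈ Finset.Icc (a+1) d, (m i:ℤ))^2) := by
      refine Finset.sum_nonneg fun a _ => ?_
      positivity
    have h2 : (0:ℤ) ≤ ((∑ i ∈ Finset.Icc 0 d, (n i:ℤ)) - ∑ i ∈ Finset.Icc 1 d, (m i:ℤ))^2 :=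
      sq_nonneg _
    linarith
  linarith [K, hpos]
end

section
/- Let V = Σ_{i=0}^{d} n_i·Sym^{2i}(ℂ²) and W = Σ_{i=1}^{d} m_i·Sym^{2i−1}(ℂ²) be two finite-dimensional representations of SU(2). Then 2·[dim(V⊗V)[0] + dim(W⊗W)[0] − 2·dim(V⊗W)[1]] ≥ n_0² + n_1² + ⋯ + n_{d−1}² + 2·n_d². -/
section helpers
variable {M : Type*} [AddCommMonoid M]

lemma sum_Icc_castInt (a b : ℕ) (g : ℤ → M) :
    ∑ t ∈ Finset.Icc ((a : ℕ) : ℤ) ((b : ℕ) : ℤ), g t = ∑ u ∈ Finset.Icc a b, g (u : ℤ) := by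
  rw [show Finset.Icc ((a : ℕ) : ℤ) ((b : ℕ) : ℤ)
        = (Finset.Icc a b).image (fun u : ℕ => (u : ℤ)) from by
      ext x
      simp only [Finset.mem_image, Finset.mem_Icc]
      constructor
      · intro h; exact ⟨x.toNat, by omega, by omega⟩
      · rintro ⟨u, hu, rfl⟩; omega]
  rw [Finset.sum_image (by intro x _ y _ h; simp only at h; omega)]

lemma sum_Icc_zeroInt (b : ℤ) (g : ℤ → M) :
    ∑ t ∈ Finset.Icc (0 : ℤ) b, g t = ∑ u ∈ Finset.range (b + 1).toNat, g (u : ℤ) := by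
  rw [show Finset.Icc (0 : ℤ) b = (Finset.range (b + 1).toNat).image (fun u : ℕ => (u : ℤ)) from by
      ext x
      simp only [Finset.mem_image, Finset.mem_range, Finset.mem_Icc]
      constructor
      · intro h; exact ⟨x.toNat, by omega, by omega⟩
      · rintro ⟨u, hu, rfl⟩; omega]
  rw [Finset.sum_image (by intro x _ y _ h; simp only at h; omega)]

lemma sum_Icc_negCast (a b : ℕ) (g : ℤ → M) :
    ∑ t ∈ Finset.Icc (-((b : ℕ) : ℤ)) (-((a : ℕ) : ℤ)), g t
      = ∑ u ∈ Finset.Icc a b, g (-(u : ℤ)) := by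
  rw [show Finset.Icc (-((b : ℕ) : ℤ)) (-((a : ℕ) : ℤ))
        = (Finset.Icc a b).image (fun u : ℕ => -(u : ℤ)) from by
      ext x
      simp only [Finset.mem_image, Finset.mem_Icc]
      constructor
      · intro h; exact ⟨(-x).toNat, by omega, by omega⟩
      · rintro ⟨u, hu, rfl⟩; omega]
  rw [Finset.sum_image (by intro x _ y _ h; simp only at h; omega)]

lemma sum_shift (d : ℕ) (f : ℕ → M) :
    ∑ i ∈ Finset.range d, f (i + 1) = ∑ i ∈ Finset.Icc 1 d, f i := by
  rw [← Finset.Ico_add_one_right_eq_Icc, Finset.sum_Ico_eq_sum_range]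
  simp [add_comm]

end helpers

lemma wtDim_even (d : ℕ) (n : ℕ → ℕ) (k : ℤ) :
    wtDim (evenRep d n) k =
      if k % 2 = 0 then ∑ j ∈ Finset.Icc (k.natAbs / 2) d, n j else 0 := by
  unfold wtDim
  split_ifs with hk
  · rw [finsum_eq_sum_of_support_subset _
      (s := (Finset.Icc (k.natAbs / 2) d).image (fun j => 2 * j)) ?_]
    · rw [Finset.sum_image (by intro x _ y _ h; simp only at h; omega)]
      apply Finset.sum_congr rfl
      intro j hj
      simp only [Finset.mem_Icc] at hj
      rw [if_pos ⟨by omega, by push_cast; omega⟩, evenRep, if_pos ⟨by omega, by omega⟩]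
      congr 1
      omega
    · intro i hi
      simp only [Function.mem_support, ne_eq] at hi
      have h1 : k.natAbs ≤ i ∧ k % 2 = (i : ℤ) % 2 := by
        by_contra h; exact hi (if_neg h)
      rw [if_pos h1, evenRep] at hi
      have h2 : i % 2 = 0 ∧ i / 2 ≤ d := by
        by_contra h; exact hi (if_neg h)
      simp only [Finset.coe_image, Set.mem_image, Finset.mem_coe, Finset.mem_Icc]
      exact ⟨i / 2, ⟨by omega, h2.2⟩, by omega⟩
  · apply finsum_eq_zero_of_forall_eq_zero
    intro i
    split_ifs with h1
    · rw [evenRep, if_neg (by omega)]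
    · rfl

lemma wtDim_odd (d : ℕ) (m : ℕ → ℕ) (k : ℤ) :
    wtDim (oddRep d m) k =
      if k % 2 = 0 then 0 else ∑ j ∈ Finset.Icc ((k.natAbs + 1) / 2) d, m j := by
  unfold wtDim
  split_ifs with hk
  · apply finsum_eq_zero_of_forall_eq_zero
    intro i
    split_ifs with h1
    · rw [oddRep, if_neg (by omega)]
    · rfl
  · rw [finsum_eq_sum_of_support_subset _
      (s := (Finset.Icc ((k.natAbs + 1) / 2) d).image (fun j => 2 * j - 1)) ?_]
    · rw [Finset.sum_image (by intro x hx y hy h; simp only [Finset.mem_coe, Finset.mem_Icc] at hx hy h; omega)]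
      apply Finset.sum_congr rfl
      intro j hj
      simp only [Finset.mem_Icc] at hj
      have hj1 : 1 ≤ j := by omega
      rw [if_pos ⟨by omega, by omega⟩, oddRep, if_pos ⟨by omega, by omega⟩]
      congr 1
      omega
    · intro i hi
      simp only [Function.mem_support, ne_eq] at hi
      have h1 : k.natAbs ≤ i ∧ k % 2 = (i : ℤ) % 2 := by
        by_contra h; exact hi (if_neg h)
      rw [if_pos h1, oddRep] at hi
      have h2 : i % 2 = 1 ∧ (i + 1) / 2 ≤ d := by
        by_contra h; exact hi (if_neg h)
      simp only [Finset.coe_image, Set.mem_image, Finset.mem_coe, Finset.mem_Icc]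
      exact ⟨(i + 1) / 2, ⟨by omega, h2.2⟩, by omega⟩

lemma tensor_even_even (d : ℕ) (n : ℕ → ℕ) :
    tensorWtDim (evenRep d n) (evenRep d n) 0 =
      (∑ j ∈ Finset.Icc 0 d, n j) ^ 2
        + 2 * ∑ t ∈ Finset.Icc 1 d, (∑ j ∈ Finset.Icc t d, n j) ^ 2 := by
  unfold tensorWtDim
  rw [finsum_eq_sum_of_support_subset _
      (s := (Finset.Icc (-((d : ℕ) : ℤ)) ((d : ℕ) : ℤ)).image (fun t => 2 * t)) ?_]
  · rw [Finset.sum_image (by intro x _ y _ h; simp only at h; omega)]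
    have key : ∀ t ∈ Finset.Icc (-((d : ℕ) : ℤ)) ((d : ℕ) : ℤ),
        wtDim (evenRep d n) (2 * t) * wtDim (evenRep d n) (0 - 2 * t)
          = (∑ j ∈ Finset.Icc t.natAbs d, n j) ^ 2 := by
      intro t _
      rw [wtDim_even, wtDim_even, if_pos (by omega), if_pos (by omega),
        show (2 * t).natAbs / 2 = t.natAbs from by omega,
        show ((0 : ℤ) - 2 * t).natAbs / 2 = t.natAbs from by omega]
      ring
    rw [Finset.sum_congr rfl key,
      show Finset.Icc (-((d : ℕ) : ℤ)) ((d : ℕ) : ℤ)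
          = Finset.Icc (-((d : ℕ) : ℤ)) (-(((1 : ℕ) : ℕ) : ℤ))
            ∪ Finset.Icc (((0 : ℕ) : ℕ) : ℤ) ((d : ℕ) : ℤ) from by
        ext x; simp only [Finset.mem_union, Finset.mem_Icc]; omega,
      Finset.sum_union (by
        rw [Finset.disjoint_left]; intro x hx hy
        simp only [Finset.mem_Icc] at hx hy; omega),
      sum_Icc_negCast 1 d, sum_Icc_castInt 0 d]
    simp only [Int.natAbs_neg, Int.natAbs_natCast]
    have hins : ∑ x ∈ Finset.Icc 0 d, (fun x => (∑ j ∈ Finset.Icc x d, n j) ^ 2) x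
        = (∑ j ∈ Finset.Icc 0 d, n j) ^ 2
          + ∑ x ∈ Finset.Icc 1 d, (∑ j ∈ Finset.Icc x d, n j) ^ 2 := by
      conv_lhs => rw [show Finset.Icc 0 d = insert 0 (Finset.Icc 1 d) from by
          ext x; simp only [Finset.mem_insert, Finset.mem_Icc]; omega,
        Finset.sum_insert (by simp)]
    rw [hins]
    ring
  · intro j hj
    simp only [Function.mem_support, ne_eq] at hj
    have h1 : j % 2 = 0 := by
      by_contra h
      exact hj (by rw [wtDim_even, if_neg h, zero_mul])
    have h2 : j.natAbs / 2 ≤ d := by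
      by_contra h
      exact hj (by rw [wtDim_even, if_pos h1, Finset.Icc_eq_empty (by omega),
        Finset.sum_empty, zero_mul])
    simp only [Finset.coe_image, Set.mem_image, Finset.mem_coe, Finset.mem_Icc]
    exact ⟨j / 2, by omega, by omega⟩

lemma tensor_odd_odd (d : ℕ) (m : ℕ → ℕ) :
    tensorWtDim (oddRep d m) (oddRep d m) 0 =
      2 * ∑ t ∈ Finset.Icc 1 d, (∑ j ∈ Finset.Icc t d, m j) ^ 2 := by
  unfold tensorWtDim
  rw [finsum_eq_sum_of_support_subset _
      (s := (Finset.Icc (-((d : ℕ) : ℤ)) (((d : ℕ) : ℤ) - 1)).image (fun t => 2 * t + 1)) ?_]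
  · rw [Finset.sum_image (by intro x _ y _ h; simp only at h; omega)]
    have key : ∀ t ∈ Finset.Icc (-((d : ℕ) : ℤ)) (((d : ℕ) : ℤ) - 1),
        wtDim (oddRep d m) (2 * t + 1) * wtDim (oddRep d m) (0 - (2 * t + 1))
          = (∑ j ∈ Finset.Icc (((2 * t + 1).natAbs + 1) / 2) d, m j) ^ 2 := by
      intro t _
      rw [wtDim_odd, wtDim_odd, if_neg (by omega), if_neg (by omega),
        show ((0 : ℤ) - (2 * t + 1)).natAbs = (2 * t + 1).natAbs from by omega]
      ring
    rw [Finset.sum_congr rfl key,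
      show Finset.Icc (-((d : ℕ) : ℤ)) (((d : ℕ) : ℤ) - 1)
          = Finset.Icc (-((d : ℕ) : ℤ)) (-(((1 : ℕ) : ℕ) : ℤ))
            ∪ Finset.Icc (0 : ℤ) (((d : ℕ) : ℤ) - 1) from by
        ext x; simp only [Finset.mem_union, Finset.mem_Icc]; omega,
      Finset.sum_union (by
        rw [Finset.disjoint_left]; intro x hx hy
        simp only [Finset.mem_Icc] at hx hy; omega),
      sum_Icc_negCast 1 d, sum_Icc_zeroInt,
      show ((((d : ℕ) : ℤ) - 1) + 1).toNat = d from by omega]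
    have e1 : ∀ u ∈ Finset.Icc 1 d,
        (∑ j ∈ Finset.Icc (((2 * (-(u : ℤ)) + 1).natAbs + 1) / 2) d, m j) ^ 2
          = (∑ j ∈ Finset.Icc u d, m j) ^ 2 := by
      intro u hu; simp only [Finset.mem_Icc] at hu
      rw [show ((2 * (-(u : ℤ)) + 1).natAbs + 1) / 2 = u from by omega]
    have e2 : ∀ u ∈ Finset.range d,
        (∑ j ∈ Finset.Icc (((2 * ((u : ℕ) : ℤ) + 1).natAbs + 1) / 2) d, m j) ^ 2
          = (fun v => (∑ j ∈ Finset.Icc v d, m j) ^ 2) (u + 1) := by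
      intro u _
      rw [show ((2 * ((u : ℕ) : ℤ) + 1).natAbs + 1) / 2 = u + 1 from by omega]
    rw [Finset.sum_congr rfl e1, Finset.sum_congr rfl e2,
      sum_shift d (fun v => (∑ j ∈ Finset.Icc v d, m j) ^ 2)]
    ring
  · intro j hj
    simp only [Function.mem_support, ne_eq] at hj
    have h1 : ¬ j % 2 = 0 := by
      by_contra h
      exact hj (by rw [wtDim_odd, if_pos h, zero_mul])
    have h2 : (j.natAbs + 1) / 2 ≤ d := by
      by_contra h
      exact hj (by rw [wtDim_odd, if_neg h1, Finset.Icc_eq_empty (by omega),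
        Finset.sum_empty, zero_mul])
    simp only [Finset.coe_image, Set.mem_image, Finset.mem_coe, Finset.mem_Icc]
    exact ⟨(j - 1) / 2, by omega, by omega⟩

lemma tensor_even_odd (d : ℕ) (n m : ℕ → ℕ) :
    tensorWtDim (evenRep d n) (oddRep d m) 1 =
      (∑ j ∈ Finset.Icc 0 d, n j) * (∑ j ∈ Finset.Icc 1 d, m j)
        + ∑ t ∈ Finset.Icc 1 d, (∑ j ∈ Finset.Icc t d, n j) * (∑ j ∈ Finset.Icc t d, m j)
        + ∑ t ∈ Finset.Icc 1 d,
            (∑ j ∈ Finset.Icc t d, n j) * (∑ j ∈ Finset.Icc (t + 1) d, m j) := by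
  unfold tensorWtDim
  rw [finsum_eq_sum_of_support_subset _
      (s := (Finset.Icc (-((d : ℕ) : ℤ)) ((d : ℕ) : ℤ)).image (fun t => 2 * t)) ?_]
  · rw [Finset.sum_image (by intro x _ y _ h; simp only at h; omega)]
    have key : ∀ t ∈ Finset.Icc (-((d : ℕ) : ℤ)) ((d : ℕ) : ℤ),
        wtDim (evenRep d n) (2 * t) * wtDim (oddRep d m) (1 - 2 * t)
          = (∑ j ∈ Finset.Icc t.natAbs d, n j)
            * (∑ j ∈ Finset.Icc (((1 - 2 * t).natAbs + 1) / 2) d, m j) := by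
      intro t _
      rw [wtDim_even, wtDim_odd, if_pos (by omega), if_neg (by omega),
        show (2 * t).natAbs / 2 = t.natAbs from by omega]
    rw [Finset.sum_congr rfl key,
      show Finset.Icc (-((d : ℕ) : ℤ)) ((d : ℕ) : ℤ)
          = Finset.Icc (-((d : ℕ) : ℤ)) (-(((1 : ℕ) : ℕ) : ℤ))
            ∪ Finset.Icc (((0 : ℕ) : ℕ) : ℤ) ((d : ℕ) : ℤ) from by
        ext x; simp only [Finset.mem_union, Finset.mem_Icc]; omega,
      Finset.sum_union (by
        rw [Finset.disjoint_left]; intro x hx hy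
        simp only [Finset.mem_Icc] at hx hy; omega),
      sum_Icc_negCast 1 d, sum_Icc_castInt 0 d]
    have e1 : ∀ u ∈ Finset.Icc 1 d,
        (∑ j ∈ Finset.Icc (-(u : ℤ)).natAbs d, n j)
            * (∑ j ∈ Finset.Icc (((1 - 2 * (-(u : ℤ))).natAbs + 1) / 2) d, m j)
          = (∑ j ∈ Finset.Icc u d, n j) * (∑ j ∈ Finset.Icc (u + 1) d, m j) := by
      intro u hu; simp only [Finset.mem_Icc] at hu
      rw [show (-(u : ℤ)).natAbs = u from by omega,
        show ((1 - 2 * (-(u : ℤ))).natAbs + 1) / 2 = u + 1 from by omega]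
    have e2 : ∀ u ∈ Finset.Icc 0 d,
        (∑ j ∈ Finset.Icc ((u : ℤ)).natAbs d, n j)
            * (∑ j ∈ Finset.Icc (((1 - 2 * (u : ℤ)).natAbs + 1) / 2) d, m j)
          = (fun v => (∑ j ∈ Finset.Icc v d, n j)
              * (∑ j ∈ Finset.Icc (max v 1) d, m j)) u := by
      intro u _
      show _ = (∑ j ∈ Finset.Icc u d, n j) * (∑ j ∈ Finset.Icc (max u 1) d, m j)
      rw [show ((u : ℤ)).natAbs = u from by omega,
        show ((1 - 2 * (u : ℤ)).natAbs + 1) / 2 = max u 1 from by omega]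
    rw [Finset.sum_congr rfl e1, Finset.sum_congr rfl e2]
    have hins : ∑ x ∈ Finset.Icc 0 d,
          (fun v => (∑ j ∈ Finset.Icc v d, n j) * (∑ j ∈ Finset.Icc (max v 1) d, m j)) x
        = (∑ j ∈ Finset.Icc 0 d, n j) * (∑ j ∈ Finset.Icc 1 d, m j)
          + ∑ x ∈ Finset.Icc 1 d,
              (∑ j ∈ Finset.Icc x d, n j) * (∑ j ∈ Finset.Icc x d, m j) := by
      conv_lhs => rw [show Finset.Icc 0 d = insert 0 (Finset.Icc 1 d) from by
          ext x; simp only [Finset.mem_insert, Finset.mem_Icc]; omega,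
        Finset.sum_insert (by simp)]
      have e3 : ∀ x ∈ Finset.Icc 1 d,
          (fun v => (∑ j ∈ Finset.Icc v d, n j) * (∑ j ∈ Finset.Icc (max v 1) d, m j)) x
            = (∑ j ∈ Finset.Icc x d, n j) * (∑ j ∈ Finset.Icc x d, m j) := by
        intro x hx; simp only [Finset.mem_Icc] at hx
        show (∑ j ∈ Finset.Icc x d, n j) * (∑ j ∈ Finset.Icc (max x 1) d, m j) = _
        rw [show max x 1 = x from by omega]
      rw [Finset.sum_congr rfl e3]
      norm_num
    rw [hins]
    ring
  · intro j hj
    simp only [Function.mem_support, ne_eq] at hj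
    have h1 : j % 2 = 0 := by
      by_contra h
      exact hj (by rw [wtDim_even, if_neg h, zero_mul])
    have h2 : j.natAbs / 2 ≤ d := by
      by_contra h
      exact hj (by rw [wtDim_even, if_pos h1, Finset.Icc_eq_empty (by omega),
        Finset.sum_empty, zero_mul])
    simp only [Finset.coe_image, Set.mem_image, Finset.mem_coe, Finset.mem_Icc]
    exact ⟨j / 2, by omega, by omega⟩

def Asum (d : ℕ) (n : ℕ → ℕ) (t : ℕ) : ℤ := ∑ j ∈ Finset.Icc t d, (n j : ℤ)

lemma tensor_even_even' (d : ℕ) (n : ℕ → ℕ) :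
    (tensorWtDim (evenRep d n) (evenRep d n) 0 : ℤ) =
      (Asum d n 0) ^ 2 + 2 * ∑ t ∈ Finset.Icc 1 d, (Asum d n t) ^ 2 := by
  rw [tensor_even_even]
  unfold Asum
  push_cast
  ring

lemma tensor_odd_odd' (d : ℕ) (m : ℕ → ℕ) :
    (tensorWtDim (oddRep d m) (oddRep d m) 0 : ℤ) =
      2 * ∑ t ∈ Finset.Icc 1 d, (Asum d m t) ^ 2 := by
  rw [tensor_odd_odd]
  unfold Asum
  push_cast
  ring

lemma tensor_even_odd' (d : ℕ) (n m : ℕ → ℕ) :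
    (tensorWtDim (evenRep d n) (oddRep d m) 1 : ℤ) =
      Asum d n 0 * Asum d m 1
        + ∑ t ∈ Finset.Icc 1 d, Asum d n t * Asum d m t
        + ∑ t ∈ Finset.Icc 1 d, Asum d n t * Asum d m (t + 1) := by
  rw [tensor_even_odd]
  unfold Asum
  push_cast
  ring

lemma sum_sub_sq (s : Finset ℕ) (f g : ℕ → ℤ) :
    ∑ t ∈ s, (f t - g t) ^ 2
      = (∑ t ∈ s, f t ^ 2) + (∑ t ∈ s, g t ^ 2) - 2 * ∑ t ∈ s, f t * g t := by
  rw [← Finset.sum_add_distrib, Finset.mul_sum, ← Finset.sum_sub_distrib]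
  apply Finset.sum_congr rfl
  intros
  ring

lemma range_to_Icc (d : ℕ) (f : ℕ → ℤ) :
    ∑ i ∈ Finset.range d, f i = f 0 + ∑ i ∈ Finset.Icc 1 d, f i - f d := by
  have h2 : ∑ i ∈ Finset.Icc 0 d, f i = ∑ i ∈ Finset.range d, f i + f d := by
    rw [show Finset.Icc 0 d = Finset.range (d + 1) from by
      ext x; simp only [Finset.mem_range, Finset.mem_Icc]; omega, Finset.sum_range_succ]
  have h3 : ∑ i ∈ Finset.Icc 0 d, f i = f 0 + ∑ i ∈ Finset.Icc 1 d, f i := by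
    rw [show Finset.Icc 0 d = insert 0 (Finset.Icc 1 d) from by
      ext x; simp only [Finset.mem_insert, Finset.mem_Icc]; omega,
      Finset.sum_insert (by simp)]
  linarith

/-- For `V = Σ_{i=0}^{d} n_i·Sym^{2i}(ℂ²)` and `W = Σ_{i=1}^{d} m_i·Sym^{2i-1}(ℂ²)`,
`2·[dim(V⊗V)[0] + dim(W⊗W)[0] − 2·dim(V⊗W)[1]] ≥ n_0² + ⋯ + n_{d-1}² + 2·n_d²`. -/
theorem lower_bound_n_squares (d : ℕ) (n m : ℕ → ℕ) :
    (∑ i ∈ Finset.range d, (n i : ℤ) ^ 2) + 2 * (n d : ℤ) ^ 2 ≤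
      2 * ((tensorWtDim (evenRep d n) (evenRep d n) 0 : ℤ)
        + tensorWtDim (oddRep d m) (oddRep d m) 0
        - 2 * tensorWtDim (evenRep d n) (oddRep d m) 1) := by
  rw [tensor_even_even', tensor_odd_odd', tensor_even_odd']
  have hBd1 : Asum d m (d + 1) = 0 := by
    unfold Asum
    rw [Finset.Icc_eq_empty (by omega), Finset.sum_empty]
  have hAd : Asum d n d = (n d : ℤ) := by
    unfold Asum
    rw [Finset.Icc_self, Finset.sum_singleton]
  have hni : ∀ i, i < d → (n i : ℤ) = Asum d n i - Asum d n (i + 1) := by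
    intro i hi
    unfold Asum
    rw [show Finset.Icc i d = insert i (Finset.Icc (i + 1) d) from by
        ext x; simp only [Finset.mem_insert, Finset.mem_Icc]; omega,
      Finset.sum_insert (by simp only [Finset.mem_Icc]; omega)]
    ring
  have key : ∀ i ∈ Finset.range d, (n i : ℤ) ^ 2 ≤
      2 * (Asum d n i - Asum d m (i + 1)) ^ 2
        + 2 * (Asum d n (i + 1) - Asum d m (i + 1)) ^ 2 := by
    intro i hi
    simp only [Finset.mem_range] at hi
    rw [hni i hi]
    nlinarith [sq_nonneg (Asum d n i - Asum d m (i + 1) + (Asum d n (i + 1) - Asum d m (i + 1)))]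
  have h1 : ∑ i ∈ Finset.range d, (n i : ℤ) ^ 2
      ≤ ∑ i ∈ Finset.range d, (2 * (Asum d n i - Asum d m (i + 1)) ^ 2
          + 2 * (Asum d n (i + 1) - Asum d m (i + 1)) ^ 2) :=
    Finset.sum_le_sum key
  have h2 : ∑ i ∈ Finset.range d, (2 * (Asum d n i - Asum d m (i + 1)) ^ 2
        + 2 * (Asum d n (i + 1) - Asum d m (i + 1)) ^ 2)
      = 2 * ∑ i ∈ Finset.range d, (Asum d n i - Asum d m (i + 1)) ^ 2
        + 2 * ∑ i ∈ Finset.range d, (Asum d n (i + 1) - Asum d m (i + 1)) ^ 2 := by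
    rw [Finset.sum_add_distrib, Finset.mul_sum, Finset.mul_sum]
  have e_a : ∑ i ∈ Finset.range d, (Asum d n (i + 1) - Asum d m (i + 1)) ^ 2
      = ∑ t ∈ Finset.Icc 1 d, (Asum d n t - Asum d m t) ^ 2 :=
    sum_shift d (fun t => (Asum d n t - Asum d m t) ^ 2)
  have f2 : ∑ t ∈ Finset.Icc 1 d, (Asum d n t - Asum d m t) ^ 2
      = (∑ t ∈ Finset.Icc 1 d, (Asum d n t) ^ 2) + (∑ t ∈ Finset.Icc 1 d, (Asum d m t) ^ 2)
        - 2 * ∑ t ∈ Finset.Icc 1 d, Asum d n t * Asum d m t :=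
    sum_sub_sq _ _ _
  have f3 : ∑ i ∈ Finset.range d, (Asum d n i - Asum d m (i + 1)) ^ 2
      = (∑ i ∈ Finset.range d, (Asum d n i) ^ 2)
        + (∑ i ∈ Finset.range d, (Asum d m (i + 1)) ^ 2)
        - 2 * ∑ i ∈ Finset.range d, Asum d n i * Asum d m (i + 1) :=
    sum_sub_sq _ _ _
  have g1 : ∑ i ∈ Finset.range d, (Asum d n i) ^ 2
      = (Asum d n 0) ^ 2 + ∑ t ∈ Finset.Icc 1 d, (Asum d n t) ^ 2 - (Asum d n d) ^ 2 :=
    range_to_Icc d (fun t => (Asum d n t) ^ 2)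
  have g2 : ∑ i ∈ Finset.range d, (Asum d m (i + 1)) ^ 2
      = ∑ t ∈ Finset.Icc 1 d, (Asum d m t) ^ 2 :=
    sum_shift d (fun t => (Asum d m t) ^ 2)
  have g3 : ∑ i ∈ Finset.range d, Asum d n i * Asum d m (i + 1)
      = Asum d n 0 * Asum d m 1 + ∑ t ∈ Finset.Icc 1 d, Asum d n t * Asum d m (t + 1)
        - Asum d n d * Asum d m (d + 1) :=
    range_to_Icc d (fun t => Asum d n t * Asum d m (t + 1))
  nlinarith [h1, h2, e_a, f2, f3, g1, g2, g3, hBd1, hAd, sq_nonneg (Asum d n d)]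
end

section
/- Let V = Σ_{i=0}^{d} n_i·Sym^{2i}(ℂ²) and W = Σ_{i=1}^{d} m_i·Sym^{2i−1}(ℂ²) be two finite-dimensional representations of SU(2), and for 1 ≤ i ≤ d set a_i = Σ_{j=i}^{d} (n_j − m_j) ∈ ℤ. Then dim(V⊗V)[0] + dim(W⊗W)[0] − 2·dim(V⊗W)[1] = (a_1 + n_0)² + Σ_{i=1}^{d} [a_i² + (a_i + m_i)²]. -/
/-- The quantity `a_i = Σ_{j=i}^{d} (n_j − m_j)` (an empty sum when `i > d`). -/
def aCoeff (d : ℕ) (n m : ℕ → ℕ) (i : ℕ) : ℤ :=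
  ∑ j ∈ Finset.Icc i d, ((n j : ℤ) - (m j : ℤ))

def Nsum (d : ℕ) (n : ℕ → ℕ) (t : ℕ) : ℕ := ∑ j ∈ Finset.Icc t d, n j

lemma wtDim_evenRep (d : ℕ) (n : ℕ → ℕ) (k : ℤ) :
    wtDim (evenRep d n) k = if k % 2 = 0 then Nsum d n (k.natAbs / 2) else 0 := by
  simp only [wtDim, evenRep, Nsum]
  by_cases hk : k % 2 = 0
  · rw [if_pos hk]
    rw [finsum_eq_sum_of_support_subset _
      (s := (Finset.Icc (k.natAbs / 2) d).image (fun j => 2 * j)) ?hsupp]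
    case hsupp =>
      intro i hi
      simp only [Function.mem_support] at hi
      by_cases h1 : k.natAbs ≤ i ∧ k % 2 = (i : ℤ) % 2
      · rw [if_pos h1] at hi
        by_cases h2 : i % 2 = 0 ∧ i / 2 ≤ d
        · simp only [Finset.coe_image, Set.mem_image, Finset.mem_coe, Finset.mem_Icc]
          exact ⟨i / 2, ⟨Nat.div_le_div_right h1.1, h2.2⟩, by omega⟩
        · rw [if_neg h2] at hi; exact absurd rfl hi
      · rw [if_neg h1] at hi; exact absurd rfl hi
    rw [Finset.sum_image (by intro a _ b _ h; simp only at h; omega)]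
    refine Finset.sum_congr rfl fun j hj => ?_
    simp only [Finset.mem_Icc] at hj
    rw [if_pos, if_pos]
    · congr 1; omega
    · exact ⟨by omega, by omega⟩
    · exact ⟨by omega, by push_cast; omega⟩
  · rw [if_neg hk]
    apply finsum_eq_zero_of_forall_eq_zero
    intro i
    by_cases h1 : k.natAbs ≤ i ∧ k % 2 = (i : ℤ) % 2
    · rw [if_pos h1, if_neg]
      rintro ⟨he, -⟩
      have := h1.2
      omega
    · rw [if_neg h1]

lemma wtDim_oddRep (d : ℕ) (m : ℕ → ℕ) (k : ℤ) :
    wtDim (oddRep d m) k = if k % 2 = 1 then Nsum d m ((k.natAbs + 1) / 2) else 0 := by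
  simp only [wtDim, oddRep, Nsum]
  by_cases hk : k % 2 = 1
  · rw [if_pos hk]
    rw [finsum_eq_sum_of_support_subset _
      (s := (Finset.Icc ((k.natAbs + 1) / 2) d).image (fun j => 2 * j - 1)) ?hsupp]
    case hsupp =>
      intro i hi
      simp only [Function.mem_support] at hi
      by_cases h1 : k.natAbs ≤ i ∧ k % 2 = (i : ℤ) % 2
      · rw [if_pos h1] at hi
        by_cases h2 : i % 2 = 1 ∧ (i + 1) / 2 ≤ d
        · simp only [Finset.coe_image, Set.mem_image, Finset.mem_coe, Finset.mem_Icc]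
          have h3 := h1.2
          exact ⟨(i + 1) / 2, ⟨by omega, h2.2⟩, by omega⟩
        · rw [if_neg h2] at hi; exact absurd rfl hi
      · rw [if_neg h1] at hi; exact absurd rfl hi
    rw [Finset.sum_image (by intro a ha b hb h; simp [Finset.mem_Icc] at ha hb; simp only at h; omega)]
    refine Finset.sum_congr rfl fun j hj => ?_
    simp only [Finset.mem_Icc] at hj
    have hj1 : 1 ≤ j := by omega
    rw [if_pos, if_pos]
    · congr 1; omega
    · exact ⟨by omega, by omega⟩
    · exact ⟨by omega, by omega⟩
  · rw [if_neg hk]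
    apply finsum_eq_zero_of_forall_eq_zero
    intro i
    by_cases h1 : k.natAbs ≤ i ∧ k % 2 = (i : ℤ) % 2
    · rw [if_pos h1, if_neg]
      rintro ⟨he, -⟩
      have := h1.2
      omega
    · rw [if_neg h1]

lemma Nsum_eq_zero_of_gt (d : ℕ) (n : ℕ → ℕ) {t : ℕ} (h : d < t) : Nsum d n t = 0 := by
  simp [Nsum, Finset.Icc_eq_empty_of_lt h]

lemma tensor_even_left (d : ℕ) (n : ℕ → ℕ) (ℓ₂ : ℕ → ℕ) (k : ℤ) :
    tensorWtDim (evenRep d n) ℓ₂ k =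
      ∑ t ∈ Finset.Icc (-(d : ℤ)) d, Nsum d n t.natAbs * wtDim ℓ₂ (k - 2 * t) := by
  simp only [tensorWtDim]
  rw [finsum_eq_sum_of_support_subset _
    (s := (Finset.Icc (-(d : ℤ)) d).image (fun t => 2 * t)) ?hsupp]
  case hsupp =>
    intro j hj
    simp only [Function.mem_support] at hj
    have h1 : wtDim (evenRep d n) j ≠ 0 := fun h => hj (by simp [h])
    rw [wtDim_evenRep] at h1
    by_cases h2 : j % 2 = 0
    · rw [if_pos h2] at h1
      have h3 : j.natAbs / 2 ≤ d := by
        by_contra h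
        exact h1 (Nsum_eq_zero_of_gt d n (by omega))
      simp only [Finset.coe_image, Set.mem_image, Finset.mem_coe, Finset.mem_Icc]
      exact ⟨j / 2, by omega, by omega⟩
    · exact absurd (if_neg h2) (fun h => h1 h)
  rw [Finset.sum_image (by intro a _ b _ h; simp only at h; omega)]
  refine Finset.sum_congr rfl fun t ht => ?_
  rw [wtDim_evenRep, if_pos (by omega)]
  congr 2
  omega

lemma tensor_odd_left (d : ℕ) (m : ℕ → ℕ) (ℓ₂ : ℕ → ℕ) (k : ℤ) :
    tensorWtDim (oddRep d m) ℓ₂ k =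
      ∑ t ∈ Finset.Icc (1 - (d : ℤ)) d,
        Nsum d m (((2 * t - 1).natAbs + 1) / 2) * wtDim ℓ₂ (k - (2 * t - 1)) := by
  simp only [tensorWtDim]
  rw [finsum_eq_sum_of_support_subset _
    (s := (Finset.Icc (1 - (d : ℤ)) d).image (fun t => 2 * t - 1)) ?hsupp]
  case hsupp =>
    intro j hj
    simp only [Function.mem_support] at hj
    have h1 : wtDim (oddRep d m) j ≠ 0 := fun h => hj (by simp [h])
    rw [wtDim_oddRep] at h1
    by_cases h2 : j % 2 = 1
    · rw [if_pos h2] at h1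
      have h3 : (j.natAbs + 1) / 2 ≤ d := by
        by_contra h
        exact h1 (Nsum_eq_zero_of_gt d m (by omega))
      simp only [Finset.coe_image, Set.mem_image, Finset.mem_coe, Finset.mem_Icc]
      exact ⟨(j + 1) / 2, by omega, by omega⟩
    · exact absurd (if_neg h2) (fun h => h1 h)
  rw [Finset.sum_image (by intro a _ b _ h; simp only at h; omega)]
  refine Finset.sum_congr rfl fun t ht => ?_
  rw [wtDim_oddRep, if_pos (by omega)]

lemma sum_Icc_int {M : Type*} [AddCommMonoid M] (d : ℕ) (f : ℤ → M) :
    ∑ t ∈ Finset.Icc (-(d : ℤ)) d, f t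
      = f 0 + ∑ i ∈ Finset.Icc 1 d, (f (i : ℤ) + f (-(i : ℤ))) := by
  induction d with
  | zero => simp
  | succ d ih =>
    have h1 : Finset.Icc (-((d : ℤ) + 1)) ((d : ℤ) + 1)
        = insert (-((d : ℤ) + 1)) (insert ((d : ℤ) + 1) (Finset.Icc (-(d : ℤ)) d)) := by
      ext x
      simp only [Finset.mem_Icc, Finset.mem_insert]
      omega
    have h2 : ((d : ℤ) + 1) ∉ Finset.Icc (-(d : ℤ)) (d : ℤ) := by
      simp only [Finset.mem_Icc]; omega
    have h3 : (-((d : ℤ) + 1)) ∉ insert ((d : ℤ) + 1) (Finset.Icc (-(d : ℤ)) (d : ℤ)) := by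
      simp only [Finset.mem_insert, Finset.mem_Icc]; omega
    push_cast
    rw [h1, Finset.sum_insert h3, Finset.sum_insert h2, ih,
      Finset.sum_Icc_succ_top (by omega : 1 ≤ d + 1)]
    push_cast
    abel

lemma Nsum_zero_eq (d : ℕ) (n : ℕ → ℕ) : Nsum d n 0 = n 0 + Nsum d n 1 := by
  have h : Finset.Icc 0 d = insert 0 (Finset.Icc 1 d) := by
    ext x; simp only [Finset.mem_Icc, Finset.mem_insert]; omega
  simp only [Nsum]
  rw [h, Finset.sum_insert (by simp)]

lemma Nsum_succ (d : ℕ) (n : ℕ → ℕ) {i : ℕ} (hi : i ≤ d) :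
    Nsum d n i = n i + Nsum d n (i + 1) := by
  have h : Finset.Icc i d = insert i (Finset.Icc (i + 1) d) := by
    ext x; simp only [Finset.mem_Icc, Finset.mem_insert]; omega
  simp only [Nsum]
  rw [h, Finset.sum_insert (by simp)]

lemma aCoeff_eq (d : ℕ) (n m : ℕ → ℕ) (i : ℕ) :
    aCoeff d n m i = (Nsum d n i : ℤ) - (Nsum d m i : ℤ) := by
  simp only [aCoeff, Nsum, Finset.sum_sub_distrib]
  push_cast
  ring

/-- For `V = Σ_{i=0}^{d} n_i·Sym^{2i}(ℂ²)`, `W = Σ_{i=1}^{d} m_i·Sym^{2i-1}(ℂ²)`, and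
`a_i = Σ_{j=i}^{d} (n_j − m_j)`,
`dim(V⊗V)[0] + dim(W⊗W)[0] − 2·dim(V⊗W)[1] = (a_1+n_0)² + Σ_{i=1}^{d} [a_i² + (a_i+m_i)²]`. -/
theorem exact_formula (d : ℕ) (n m : ℕ → ℕ) :
    (tensorWtDim (evenRep d n) (evenRep d n) 0 : ℤ)
        + tensorWtDim (oddRep d m) (oddRep d m) 0
        - 2 * tensorWtDim (evenRep d n) (oddRep d m) 1 =
      (aCoeff d n m 1 + (n 0 : ℤ)) ^ 2
        + ∑ i ∈ Finset.Icc 1 d,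
            ((aCoeff d n m i) ^ 2 + (aCoeff d n m i + (m i : ℤ)) ^ 2) := by
  -- V ⊗ V at weight 0
  have hVV : tensorWtDim (evenRep d n) (evenRep d n) 0
      = Nsum d n 0 * Nsum d n 0
        + ∑ i ∈ Finset.Icc 1 d, (Nsum d n i * Nsum d n i + Nsum d n i * Nsum d n i) := by
    rw [tensor_even_left]
    have hterm : ∀ t ∈ Finset.Icc (-(d : ℤ)) (d : ℤ),
        Nsum d n t.natAbs * wtDim (evenRep d n) (0 - 2 * t)
          = Nsum d n t.natAbs * Nsum d n t.natAbs := by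
      intro t _
      rw [wtDim_evenRep, if_pos (by omega)]
      have h : (0 - 2 * t).natAbs / 2 = t.natAbs := by omega
      rw [h]
    rw [Finset.sum_congr rfl hterm, sum_Icc_int]
    refine congrArg₂ (· + ·) (by norm_num) ?_
    · refine Finset.sum_congr rfl fun i hi => ?_
      congr 1 <;> congr 1 <;> congr 1 <;> omega
  -- W ⊗ W at weight 0
  have hWW : tensorWtDim (oddRep d m) (oddRep d m) 0
      = Nsum d m 1 * Nsum d m 1
        + ∑ i ∈ Finset.Icc 1 d,
            (Nsum d m i * Nsum d m i + Nsum d m (i + 1) * Nsum d m (i + 1)) := by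
    rw [tensor_odd_left]
    have hext : ∑ t ∈ Finset.Icc (1 - (d : ℤ)) d,
          Nsum d m (((2 * t - 1).natAbs + 1) / 2) * wtDim (oddRep d m) (0 - (2 * t - 1))
        = ∑ t ∈ Finset.Icc (-(d : ℤ)) d,
          Nsum d m (((2 * t - 1).natAbs + 1) / 2) * wtDim (oddRep d m) (0 - (2 * t - 1)) := by
      apply Finset.sum_subset
      · intro x hx
        simp only [Finset.mem_Icc] at hx ⊢
        omega
      · intro x hx hx'
        simp only [Finset.mem_Icc] at hx hx'
        have hxd : x = -(d : ℤ) := by omega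
        subst hxd
        have h : (((2 * (-(d : ℤ)) - 1).natAbs + 1) / 2) = d + 1 := by omega
        rw [h, Nsum_eq_zero_of_gt d m (by omega)]
        simp
    rw [hext]
    have hterm : ∀ t ∈ Finset.Icc (-(d : ℤ)) (d : ℤ),
        Nsum d m (((2 * t - 1).natAbs + 1) / 2) * wtDim (oddRep d m) (0 - (2 * t - 1))
          = Nsum d m (((2 * t - 1).natAbs + 1) / 2)
            * Nsum d m (((2 * t - 1).natAbs + 1) / 2) := by
      intro t _
      rw [wtDim_oddRep, if_pos (by omega)]
      have h : ((0 - (2 * t - 1)).natAbs + 1) / 2 = ((2 * t - 1).natAbs + 1) / 2 := by omega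
      rw [h]
    rw [Finset.sum_congr rfl hterm, sum_Icc_int]
    refine congrArg₂ (· + ·) (by norm_num) ?_
    · refine Finset.sum_congr rfl fun i hi => ?_
      simp only [Finset.mem_Icc] at hi
      congr 1 <;> congr 1 <;> congr 1 <;> omega
  -- V ⊗ W at weight 1
  have hVW : tensorWtDim (evenRep d n) (oddRep d m) 1
      = Nsum d n 0 * Nsum d m 1
        + ∑ i ∈ Finset.Icc 1 d,
            (Nsum d n i * Nsum d m i + Nsum d n i * Nsum d m (i + 1)) := by
    rw [tensor_even_left]
    have hterm : ∀ t ∈ Finset.Icc (-(d : ℤ)) (d : ℤ),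
        Nsum d n t.natAbs * wtDim (oddRep d m) (1 - 2 * t)
          = Nsum d n t.natAbs * Nsum d m (((1 - 2 * t).natAbs + 1) / 2) := by
      intro t _
      rw [wtDim_oddRep, if_pos (by omega)]
    rw [Finset.sum_congr rfl hterm, sum_Icc_int]
    refine congrArg₂ (· + ·) (by norm_num) ?_
    · refine Finset.sum_congr rfl fun i hi => ?_
      simp only [Finset.mem_Icc] at hi
      congr 1 <;> congr 1 <;> congr 1 <;> omega
  rw [hVV, hWW, hVW]
  -- rewrite the right-hand side
  have ha : ∀ i ∈ Finset.Icc 1 d,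
      (aCoeff d n m i) ^ 2 + (aCoeff d n m i + (m i : ℤ)) ^ 2
        = ((Nsum d n i : ℤ) * (Nsum d n i : ℤ) + (Nsum d n i : ℤ) * (Nsum d n i : ℤ))
          + ((Nsum d m i : ℤ) * (Nsum d m i : ℤ)
            + (Nsum d m (i + 1) : ℤ) * (Nsum d m (i + 1) : ℤ))
          - 2 * ((Nsum d n i : ℤ) * (Nsum d m i : ℤ)
            + (Nsum d n i : ℤ) * (Nsum d m (i + 1) : ℤ)) := by
    intro i hi
    simp only [Finset.mem_Icc] at hi
    rw [aCoeff_eq]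
    have hs : (Nsum d m i : ℤ) = (m i : ℤ) + (Nsum d m (i + 1) : ℤ) := by
      rw [Nsum_succ d m hi.2]
      push_cast
      ring
    rw [hs]
    ring
  have ha1 : aCoeff d n m 1 + (n 0 : ℤ) = (Nsum d n 0 : ℤ) - (Nsum d m 1 : ℤ) := by
    rw [aCoeff_eq]
    have hs : (Nsum d n 0 : ℤ) = (n 0 : ℤ) + (Nsum d n 1 : ℤ) := by
      rw [Nsum_zero_eq d n]
      push_cast
      ring
    rw [hs]
    ring
  rw [ha1, Finset.sum_congr rfl ha]
  simp only [Finset.sum_add_distrib, Finset.sum_sub_distrib, ← Finset.mul_sum]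
  push_cast
  ring
end
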